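/- arXiv:0712.3177 — 3 statements merged into one kernel-verified Lean document; each statement's English description precedes it below -/
import Mathlib

section
/- For every w ≥ 1, the inclusion of C_w^w into C_w is a quasi-isomorphism: it induces an isomorphism on cohomology in every degree. -/
/-!
STATEMENT 0.  The telescope (wrapped) complex.

For each integer `w ≥ 1` we are given a ℤ-graded cochain complex `(A_w, δ_w)`
over a field `K` and degree-0 chain maps `κ_w : A_w → A_{w+1}`.  We index the
family by `i : ℕ`, the summand `i` corresponding to the weight `w = i + 1`, so
that all weights `w ≥ 1` occur exactly once.

`CW^n = ⨁_{w ≥ 1} (A_w^n ⊕ A_w^{n+1})`: an element of the `w`-summand is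
written `a + q b` with `a ∈ A_w^n` (the q-free part, the first factor) and
`b ∈ A_w^{n+1}` (the q-part, the second factor; `q` has degree `-1`).

The differential is
`μ¹(a + q b) = (−1)^{deg a} δ a + (−1)^{deg b} (q δ b + κ b − b)`,
where `κ b` lies in the `(w+1)`-st summand.  In components on the `w`-summand
of `CW^n` this is: q-free part of summand `w`: `(−1)^n (δ a + b)`; q-part of
summand `w`: `(−1)^{n+1} δ b`; q-free part of summand `w+1`: `(−1)^{n+1} κ b`.

The statement: `μ¹ ∘ μ¹ = 0`, so `(CW, μ¹)` is a ℤ-graded cochain complex.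
-/

open DirectSum

variable (K : Type) [Field K]
variable (A : ℕ → ℤ → Type) [∀ i n, AddCommGroup (A i n)] [∀ i n, Module K (A i n)]

/-- We fix once and for all the (defeq) additive structure used on the pairs
(q-free part, q-part), to keep instance paths uniform. -/
@[reducible] instance (priority := high) (n m : ℤ) (i : ℕ) :
    AddCommMonoid (A i n × A i m) :=
  AddCommGroup.toAddCommMonoid

/-- The degree-`n` part of the telescope complex: the direct sum over all
weights of (q-free part in degree `n`) × (q-part, of the form `q·b` with
`b` in degree `n+1`). -/
abbrev TelescopeCW (n : ℤ) : Type := ⨁ i : ℕ, (A i n × A i (n + 1))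

/-- The telescope differential
`μ¹(a + q b) = (−1)^{deg a} δ a + (−1)^{deg b} (q δ b + κ b − b)`. -/
noncomputable def telescopeMu1
    (δ : ∀ i n, A i n →ₗ[K] A i (n + 1))
    (κ : ∀ i n, A i n →ₗ[K] A (i + 1) n) (n : ℤ) :
    TelescopeCW A n →ₗ[K] TelescopeCW A (n + 1) :=
  DirectSum.toModule K ℕ (TelescopeCW A (n + 1)) fun i =>
    ((DirectSum.lof K ℕ (fun j => A j (n + 1) × A j (n + 1 + 1)) i).comp
        (LinearMap.prod
          (((-1 : K) ^ n) •
            ((δ i n).comp (LinearMap.fst K (A i n) (A i (n + 1))) +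
              LinearMap.snd K (A i n) (A i (n + 1))))
          (((-1 : K) ^ (n + 1)) •
            ((δ i (n + 1)).comp (LinearMap.snd K (A i n) (A i (n + 1)))))))
      +
    ((DirectSum.lof K ℕ (fun j => A j (n + 1) × A j (n + 1 + 1)) (i + 1)).comp
        (LinearMap.prod
          (((-1 : K) ^ (n + 1)) •
            ((κ i (n + 1)).comp (LinearMap.snd K (A i n) (A i (n + 1)))))
          (0 : (A i n × A i (n + 1)) →ₗ[K] A (i + 1) (n + 1 + 1))))

section Aux

variable (δ : ∀ i n, A i n →ₗ[K] A i (n + 1)) (κ : ∀ i n, A i n →ₗ[K] A (i + 1) n)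

/-- componentwise description of the diagonal part of the differential -/
def FmP (n : ℤ) (i : ℕ) (m : A i n × A i (n + 1)) : A i (n + 1) × A i (n + 1 + 1) :=
  ((-1 : K) ^ n • (δ i n m.1 + m.2), (-1 : K) ^ (n + 1) • (δ i (n + 1) m.2))

/-- componentwise description of the off-diagonal part of the differential -/
def GmP (n : ℤ) (i : ℕ) (m : A i n × A i (n + 1)) : A (i + 1) (n + 1) × A (i + 1) (n + 1 + 1) :=
  ((-1 : K) ^ (n + 1) • (κ i (n + 1) m.2), 0)

lemma mu1_lof (n : ℤ) (i : ℕ) (m : A i n × A i (n + 1)) :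
    telescopeMu1 K A δ κ n (DirectSum.lof K ℕ (fun j => A j n × A j (n + 1)) i m) =
      DirectSum.lof K ℕ (fun j => A j (n + 1) × A j (n + 1 + 1)) i (FmP K A δ n i m) +
      DirectSum.lof K ℕ (fun j => A j (n + 1) × A j (n + 1 + 1)) (i + 1) (GmP K A κ n i m) := by
  rw [telescopeMu1, DirectSum.toModule_lof]
  simp [FmP, GmP, LinearMap.prod_apply]

lemma mu1_apply_zero (n : ℤ) (x : TelescopeCW A n) :
    telescopeMu1 K A δ κ n x 0 = FmP K A δ n 0 (x 0) := by
  induction x using DirectSum.induction_on with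
  | zero => simp [FmP]; rfl
  | of i m =>
    rw [← DirectSum.lof_eq_of K, mu1_lof, DirectSum.add_apply]
    rcases Nat.eq_zero_or_pos i with hi | hi
    · subst hi
      rw [DirectSum.lof_eq_of, DirectSum.lof_eq_of, DirectSum.of_eq_same,
        DirectSum.of_eq_of_ne _ _ _ (by omega), DirectSum.lof_eq_of, DirectSum.of_eq_same,
        add_zero]
    · rw [DirectSum.lof_eq_of, DirectSum.lof_eq_of, DirectSum.of_eq_of_ne _ _ _ (by omega),
        DirectSum.of_eq_of_ne _ _ _ (by omega), DirectSum.lof_eq_of,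
        DirectSum.of_eq_of_ne _ _ _ (by omega), add_zero]
      simp [FmP]
      rfl
  | add x y hx hy =>
    rw [map_add, DirectSum.add_apply, hx, hy, DirectSum.add_apply]
    simp [FmP, Prod.ext_iff, smul_add, map_add]
    abel

lemma mu1_apply_succ (n : ℤ) (x : TelescopeCW A n) (i : ℕ) :
    telescopeMu1 K A δ κ n x (i + 1) =
      FmP K A δ n (i + 1) (x (i + 1)) + GmP K A κ n i (x i) := by
  induction x using DirectSum.induction_on with
  | zero => simp [FmP, GmP]; rfl
  | of j m =>
    rw [← DirectSum.lof_eq_of K, mu1_lof, DirectSum.add_apply]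
    rcases eq_or_ne j (i + 1) with hj | hj
    · subst hj
      rw [DirectSum.lof_eq_of, DirectSum.lof_eq_of, DirectSum.of_eq_same,
        DirectSum.of_eq_of_ne _ _ _ (by omega), DirectSum.lof_eq_of, DirectSum.of_eq_same,
        DirectSum.of_eq_of_ne _ _ _ (by omega), add_zero]
      simp [GmP]
    · rcases eq_or_ne j i with hj2 | hj2
      · subst hj2
        rw [DirectSum.lof_eq_of, DirectSum.lof_eq_of, DirectSum.of_eq_of_ne _ _ _ (by omega),
          DirectSum.of_eq_same, DirectSum.lof_eq_of, DirectSum.of_eq_of_ne _ _ _ (by omega),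
          DirectSum.of_eq_same, zero_add]
        simp [FmP]
      · rw [DirectSum.lof_eq_of, DirectSum.lof_eq_of, DirectSum.of_eq_of_ne _ _ _ (by omega),
          DirectSum.of_eq_of_ne _ _ _ (by omega), DirectSum.lof_eq_of,
          DirectSum.of_eq_of_ne _ _ _ (by omega), DirectSum.of_eq_of_ne _ _ _ (by omega), add_zero]
        simp [FmP, GmP]
        rfl
  | add x y hx hy =>
    rw [map_add, DirectSum.add_apply, hx, hy, DirectSum.add_apply, DirectSum.add_apply]
    simp [FmP, GmP, Prod.ext_iff, smul_add, map_add]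
    abel

/-- telescope partial sums: `teleS a j = a j + κ (teleS a (j-1))`. -/
noncomputable def teleS (m : ℤ) (a : ∀ j, A j m) : ∀ j, A j m :=
  fun j => Nat.rec (a 0) (fun i si => a (i + 1) + κ i m si) j

lemma neg_one_zpow_mul_self (m : ℤ) : ((-1 : K) ^ m) * ((-1 : K) ^ m) = 1 := by
  rcases Int.even_or_odd m with h | h
  · rw [h.neg_one_zpow]; norm_num
  · rw [h.neg_one_zpow]; norm_num

lemma neg_one_zpow_smul_cancel {M : Type} [AddCommGroup M] [Module K M] (m : ℤ) (v : M) :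
    ((-1 : K) ^ m) • ((-1 : K) ^ m) • v = v := by
  rw [smul_smul, neg_one_zpow_mul_self, one_smul]

lemma neg_one_zpow_succ (m : ℤ) : ((-1 : K) ^ (m + 1)) = -((-1 : K) ^ m) := by
  rw [zpow_add₀ (by norm_num : (-1 : K) ≠ 0), zpow_one, mul_neg_one]

lemma neg_one_zpow_smul_eq_zero {M : Type} [AddCommGroup M] [Module K M] (m : ℤ) {v : M}
    (h : ((-1 : K) ^ m) • v = 0) : v = 0 := by
  have h2 := congrArg (fun w => ((-1 : K) ^ m) • w) h
  simpa [neg_one_zpow_smul_cancel] using h2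

lemma neg_one_zpow_smul_inj {M : Type} [AddCommGroup M] [Module K M] (m : ℤ) {v w : M}
    (h : ((-1 : K) ^ m) • v = ((-1 : K) ^ m) • w) : v = w := by
  have h2 := congrArg (fun u => ((-1 : K) ^ m) • u) h
  simpa [neg_one_zpow_smul_cancel] using h2

lemma sum_lof_apply (M : ℕ → Type) [∀ i, AddCommGroup (M i)] [∀ i, Module K (M i)]
    (W : ℕ) (f : ∀ j, M j) (i : ℕ) :
    (∑ j ∈ Finset.range W, DirectSum.lof K ℕ M j (f j)) i = if i < W then f i else 0 := by
  rw [DFinsupp.finset_sum_apply]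
  rcases lt_or_ge i W with h | h
  · rw [if_pos h, Finset.sum_eq_single_of_mem i (Finset.mem_range.mpr h)]
    · exact DirectSum.of_eq_same i (f i)
    · intro j _ hj
      exact DirectSum.of_eq_of_ne _ _ _ (by omega)
  · rw [if_neg (by omega), Finset.sum_eq_zero]
    intro j hj
    exact DirectSum.of_eq_of_ne _ _ _ (by simp at hj; omega)

lemma eq_lof_single (M : ℕ → Type) [∀ i, AddCommGroup (M i)] [∀ i, Module K (M i)]
    (x : ⨁ i, M i) (W : ℕ) (h : ∀ i, i ≠ W → x i = 0) :
    x = DirectSum.lof K ℕ M W (x W) := by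
  refine DFinsupp.ext fun i => ?_
  rcases eq_or_ne i W with rfl | hi
  · rw [DirectSum.lof_eq_of, DirectSum.of_eq_same]
  · rw [h i hi, DirectSum.lof_eq_of, DirectSum.of_eq_of_ne _ _ _ hi]

end Aux

/-!
STATEMENT 2.  For `w ≥ 1`, `C_w ⊆ CW` is the subcomplex spanned by the full
summands `A_v^n ⊕ q·A_v^{n+1}` for all weights `v < w` together with the
q-free part `A_w^n` of the `w`-th summand, and `C_w^w ⊆ C_w` is the q-free
part of the `w`-th summand alone.  The statement: the inclusion of `C_w^w`
into `C_w` is a quasi-isomorphism, i.e. induces an isomorphism on cohomology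
in every degree.

In our indexing the summand `i : ℕ` has weight `i + 1`; the parameter `W : ℕ`
below corresponds to the weight `w = W + 1`, so as `W` ranges over `ℕ` the
statement is made for every `w ≥ 1`.  Membership in `C_w` is the predicate
"`x i = 0` for `i > W` and the q-part of `x W` vanishes"; membership in
`C_w^w` is "`x i = 0` for `i ≠ W` and the q-part of `x W` vanishes".

The quasi-isomorphism claim is stated, for the cohomology in each degree
`n + 1` (with `n` ranging over all of `ℤ`), in the standard unfolded form:
every cocycle of `C_w` differs from a cocycle of `C_w^w` by a coboundary of
`C_w`, and every cocycle of `C_w^w` which bounds in `C_w` already bounds in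
`C_w^w`.
-/

theorem telescope_Cww_inclusion_quasiIso
    (δ : ∀ i n, A i n →ₗ[K] A i (n + 1))
    (κ : ∀ i n, A i n →ₗ[K] A (i + 1) n)
    (hδ : ∀ i n, (δ i (n + 1)).comp (δ i n) = 0)
    (hκ : ∀ i n, (κ i (n + 1)).comp (δ i n) = (δ (i + 1) n).comp (κ i n))
    (W : ℕ) :
    ∀ n : ℤ,
      -- surjectivity on cohomology
      (∀ x : TelescopeCW A (n + 1),
        ((∀ i, W < i → x i = 0) ∧ (x W).2 = 0) →
        telescopeMu1 K A δ κ (n + 1) x = 0 →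
        ∃ c : TelescopeCW A (n + 1),
          ((∀ i, i ≠ W → c i = 0) ∧ (c W).2 = 0) ∧
          telescopeMu1 K A δ κ (n + 1) c = 0 ∧
          ∃ y : TelescopeCW A n, ((∀ i, W < i → y i = 0) ∧ (y W).2 = 0) ∧
            x - c = telescopeMu1 K A δ κ n y) ∧
      -- injectivity on cohomology
      (∀ c : TelescopeCW A (n + 1),
        ((∀ i, i ≠ W → c i = 0) ∧ (c W).2 = 0) →
        telescopeMu1 K A δ κ (n + 1) c = 0 →
        (∃ y : TelescopeCW A n, ((∀ i, W < i → y i = 0) ∧ (y W).2 = 0) ∧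
          telescopeMu1 K A δ κ n y = c) →
        ∃ y : TelescopeCW A n, ((∀ i, i ≠ W → y i = 0) ∧ (y W).2 = 0) ∧
          telescopeMu1 K A δ κ n y = c) := by
  intro n
  constructor
  · -- surjectivity
    intro x hx hcoc
    obtain ⟨hxsupp, hxq⟩ := hx
    have hb : ∀ j, (telescopeMu1 K A δ κ (n + 1) x) j = 0 := by
      intro j; rw [hcoc]; simp
    have hrel0 : δ 0 (n + 1) (x 0).1 + (x 0).2 = 0 := by
      have h := hb 0
      rw [mu1_apply_zero] at h
      have h1 := congrArg Prod.fst h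
      simp only [FmP, Prod.fst_zero] at h1
      exact neg_one_zpow_smul_eq_zero K _ h1
    have hrelS : ∀ i, δ (i + 1) (n + 1) (x (i + 1)).1 + (x (i + 1)).2
        = κ i (n + 1 + 1) (x i).2 := by
      intro i
      have h := hb (i + 1)
      rw [mu1_apply_succ] at h
      have h1 := congrArg Prod.fst h
      simp only [FmP, GmP, Prod.fst_add, Prod.fst_zero] at h1
      rw [neg_one_zpow_succ K (n + 1), neg_smul, ← sub_eq_add_neg, sub_eq_zero] at h1
      exact neg_one_zpow_smul_inj K _ h1
    obtain ⟨s, hs0, hsS⟩ :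
        ∃ s : ∀ j, A j (n + 1), (s 0 = (-1 : K) ^ n • (x 0).1) ∧
          (∀ j, s (j + 1) = (-1 : K) ^ n • (x (j + 1)).1 + κ j (n + 1) (s j)) :=
      ⟨teleS K A κ (n + 1) (fun j => (-1 : K) ^ n • (x j).1), rfl, fun _ => rfl⟩
    have hδs : ∀ j, δ j (n + 1) (s j) = (-1 : K) ^ (n + 1) • (x j).2 := by
      intro j
      induction j with
      | zero =>
        rw [hs0, map_smul,
          show δ 0 (n + 1) (x 0).1 = -(x 0).2 from eq_neg_of_add_eq_zero_left hrel0,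
          smul_neg, neg_one_zpow_succ K n, neg_smul]
      | succ j ih =>
        rw [hsS, map_add, map_smul,
          show δ (j + 1) (n + 1) (x (j + 1)).1
              = κ j (n + 1 + 1) (x j).2 - (x (j + 1)).2 from eq_sub_of_add_eq (hrelS j)]
        have hcm := LinearMap.congr_fun (hκ j (n + 1)) (s j)
        simp only [LinearMap.comp_apply] at hcm
        rw [← hcm, ih, map_smul, neg_one_zpow_succ K n, smul_sub, neg_smul, neg_smul]
        abel
    have hδsW : δ W (n + 1) (s W) = 0 := by rw [hδs W, hxq, smul_zero]
    have key : ∀ j, (-1 : K) ^ n • s (j + 1) + (-1 : K) ^ (n + 1) • κ j (n + 1) (s j)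
        = (x (j + 1)).1 := by
      intro j
      rw [hsS, smul_add, smul_smul, neg_one_zpow_mul_self, one_smul,
        neg_one_zpow_succ K n, neg_smul]
      abel
    have hF : ∀ j, FmP K A δ n j ((0 : A j n), s j) = ((-1 : K) ^ n • s j, (x j).2) := by
      intro j
      simp [FmP, hδs j, neg_one_zpow_smul_cancel K]
    have hG : ∀ j, GmP K A κ n j ((0 : A j n), s j)
        = ((-1 : K) ^ (n + 1) • κ j (n + 1) (s j), 0) := by
      intro j; simp [GmP]
    refine ⟨DirectSum.lof K ℕ (fun j => A j (n + 1) × A j (n + 1 + 1)) W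
        ((-1 : K) ^ n • s W, 0), ⟨?_, ?_⟩, ?_,
      ∑ j ∈ Finset.range W, DirectSum.lof K ℕ (fun j => A j n × A j (n + 1)) j (0, s j),
      ⟨?_, ?_⟩, ?_⟩
    · intro i hi
      rw [DirectSum.lof_eq_of, DirectSum.of_eq_of_ne _ _ _ hi]
    · rw [DirectSum.lof_eq_of, DirectSum.of_eq_same]
    · rw [mu1_lof]
      simp [FmP, GmP, map_smul, hδsW]
      erw [map_zero, map_zero, add_zero]
    · intro i hi
      rw [sum_lof_apply, if_neg (by omega)]
    · rw [sum_lof_apply, if_neg (lt_irrefl W)]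
      all_goals rfl
    · refine DFinsupp.ext fun j => ?_
      rw [DirectSum.sub_apply]
      cases j with
      | zero =>
        rw [mu1_apply_zero, sum_lof_apply]
        rcases Nat.eq_zero_or_pos W with hW | hW
        · subst hW
          rw [if_neg (lt_irrefl 0), DirectSum.lof_eq_of, DirectSum.of_eq_same]
          have : FmP K A δ n 0 (0 : A 0 n × A 0 (n + 1)) = 0 := by simp [FmP]
          rw [this, sub_eq_zero, hs0, neg_one_zpow_smul_cancel K, ← hxq]
          all_goals exact Prod.mk.eta.symm
        · rw [if_pos hW, DirectSum.lof_eq_of, DirectSum.of_eq_of_ne _ _ _ (by omega),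
            sub_zero, hF 0, hs0, neg_one_zpow_smul_cancel K]
          all_goals exact Prod.mk.eta.symm
      | succ i =>
        rw [mu1_apply_succ, sum_lof_apply, sum_lof_apply]
        rcases lt_trichotomy (i + 1) W with h1 | h1 | h1
        · rw [if_pos h1, if_pos (by omega), DirectSum.lof_eq_of,
            DirectSum.of_eq_of_ne _ _ _ (by omega), sub_zero, hF, hG, Prod.mk_add_mk,
            key i, add_zero]
          all_goals exact Prod.mk.eta.symm
        · subst h1
          rw [if_neg (lt_irrefl _), if_pos (Nat.lt_succ_self i), DirectSum.lof_eq_of,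
            DirectSum.of_eq_same]
          have : FmP K A δ n (i + 1) (0 : A (i + 1) n × A (i + 1) (n + 1)) = 0 := by
            simp [FmP]
          rw [this, zero_add, hG]
          refine Prod.ext ?_ ?_
          · show (x (i + 1)).1 - (-1 : K) ^ n • s (i + 1)
                = (-1 : K) ^ (n + 1) • κ i (n + 1) (s i)
            rw [← key i]; abel
          · show (x (i + 1)).2 - 0 = 0
            rw [hxq, sub_zero]
        · rw [if_neg (by omega), if_neg (by omega), DirectSum.lof_eq_of,
            DirectSum.of_eq_of_ne _ _ _ (by omega), sub_zero, hxsupp (i + 1) (by omega)]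
          simp [FmP, GmP]
          rfl
  · -- injectivity
    intro c hc hccoc hbound
    obtain ⟨hcsupp, hcq⟩ := hc
    obtain ⟨y, ⟨hysupp, hyq⟩, hyeq⟩ := hbound
    have hb : ∀ j, (telescopeMu1 K A δ κ n y) j = c j := fun j => by rw [hyeq]
    have hrel0 : 0 ≠ W → δ 0 n (y 0).1 + (y 0).2 = 0 := by
      intro h0
      have h := hb 0
      rw [mu1_apply_zero, hcsupp 0 h0] at h
      have h1 := congrArg Prod.fst h
      simp only [FmP, Prod.fst_zero] at h1
      exact neg_one_zpow_smul_eq_zero K _ h1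
    have hrelS : ∀ i, i + 1 ≠ W →
        δ (i + 1) n (y (i + 1)).1 + (y (i + 1)).2 = κ i (n + 1) (y i).2 := by
      intro i hi
      have h := hb (i + 1)
      rw [mu1_apply_succ, hcsupp _ hi] at h
      have h1 := congrArg Prod.fst h
      simp only [FmP, GmP, Prod.fst_add, Prod.fst_zero] at h1
      rw [neg_one_zpow_succ K n, neg_smul, ← sub_eq_add_neg, sub_eq_zero] at h1
      exact neg_one_zpow_smul_inj K _ h1
    obtain ⟨t, ht0, htS⟩ :
        ∃ t : ∀ j, A j n, (t 0 = (y 0).1) ∧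
          (∀ j, t (j + 1) = (y (j + 1)).1 + κ j n (t j)) :=
      ⟨teleS K A κ n (fun j => (y j).1), rfl, fun _ => rfl⟩
    have hδt : ∀ j, j < W → δ j n (t j) = -(y j).2 := by
      intro j
      induction j with
      | zero =>
        intro h0
        rw [ht0]
        exact eq_neg_of_add_eq_zero_left (hrel0 (by omega))
      | succ j ih =>
        intro hj
        rw [htS, map_add,
          show δ (j + 1) n (y (j + 1)).1 = κ j (n + 1) (y j).2 - (y (j + 1)).2 from
            eq_sub_of_add_eq (hrelS j (by omega))]
        have hcm := LinearMap.congr_fun (hκ j n) (t j)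
        simp only [LinearMap.comp_apply] at hcm
        rw [← hcm, ih (by omega), map_neg]
        abel
    have hδtW : δ W n (t W) = (-1 : K) ^ n • (c W).1 := by
      cases W with
      | zero =>
        have h := hb 0
        rw [mu1_apply_zero] at h
        have h1 := congrArg Prod.fst h
        simp only [FmP] at h1
        rw [hyq, add_zero] at h1
        rw [ht0, ← h1, neg_one_zpow_smul_cancel]
      | succ i =>
        have h := hb (i + 1)
        rw [mu1_apply_succ] at h
        have h1 := congrArg Prod.fst h
        simp only [FmP, GmP, Prod.fst_add] at h1
        rw [hyq, add_zero] at h1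
        have hcm := LinearMap.congr_fun (hκ i n) (t i)
        simp only [LinearMap.comp_apply] at hcm
        rw [htS, map_add, ← hcm,
          hδt i (Nat.lt_succ_self i), map_neg, ← h1, smul_add, neg_one_zpow_smul_cancel,
          smul_smul, neg_one_zpow_succ K n, mul_neg, neg_one_zpow_mul_self, neg_smul,
          one_smul]
    refine ⟨DirectSum.lof K ℕ (fun j => A j n × A j (n + 1)) W (t W, 0), ⟨?_, ?_⟩, ?_⟩
    · intro i hi
      rw [DirectSum.lof_eq_of, DirectSum.of_eq_of_ne _ _ _ hi]
    · rw [DirectSum.lof_eq_of, DirectSum.of_eq_same]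
    · rw [mu1_lof]
      have hFc : FmP K A δ n W (t W, (0 : A W (n + 1))) = ((c W).1, 0) := by
        simp [FmP, hδtW, neg_one_zpow_smul_cancel K]
      have hGc : GmP K A κ n W (t W, (0 : A W (n + 1))) = 0 := by simp [GmP]
      rw [hFc, hGc, map_zero, add_zero]
      have hcW : ((c W).1, (0 : A W (n + 1 + 1))) = c W := by
        rw [← hcq]
      rw [hcW]
      exact (eq_lof_single K _ c W hcsupp).symm
end

section
/- If X(u(z₀)) = 0 for some z₀ ∈ U, then u is constant on U, equal to u(z₀). (This is the ODE argument in the paper showing that a trivial solution du = X ⊗ γ whose image meets a stationary point of the vector field X must be constant.) -/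
open Set Metric
open scoped NNReal

private lemma lipsmul {m : ℕ} {X : (Fin m → ℝ) → (Fin m → ℝ)} {K : ℝ≥0}
    {s : Set (Fin m → ℝ)} (hX : LipschitzOnWith K X s) {c C : ℝ} (hc : |c| ≤ C) :
    LipschitzOnWith (Real.toNNReal C * K) (fun y => c • X y) s := by
  have hC0 : 0 ≤ C := le_trans (abs_nonneg c) hc
  apply LipschitzOnWith.of_dist_le_mul
  intro x hx y hy
  calc dist (c • X x) (c • X y) = |c| * dist (X x) (X y) := by
        rw [dist_smul₀, Real.norm_eq_abs]
    _ ≤ C * (K * dist x y) :=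
        mul_le_mul hc (hX.dist_le_mul x hx y hy) dist_nonneg hC0
    _ = (Real.toNNReal C * K : ℝ≥0) * dist x y := by
        push_cast [Real.coe_toNNReal C hC0]; ring

private lemma ode_const {m : ℕ} {X : (Fin m → ℝ) → (Fin m → ℝ)} {K : ℝ≥0}
    {c : Fin m → ℝ} {ε : ℝ}
    (hLip : LipschitzOnWith K X (closedBall c ε)) (hXc : X c = 0)
    {f : ℝ → Fin m → ℝ} {P : ℝ → ℝ} {C : ℝ} {a b : ℝ}
    (hf' : ∀ σ ∈ uIcc a b, HasDerivAt f (P σ • X (f σ)) σ)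
    (hmem : ∀ σ ∈ uIcc a b, f σ ∈ closedBall c ε)
    (hP : ∀ σ ∈ uIcc a b, |P σ| ≤ C)
    (hfa : f a = c) : f b = c := by
  classical
  have ha : a ∈ uIcc a b := Set.left_mem_uIcc
  have hε : 0 ≤ ε := le_trans dist_nonneg (mem_closedBall.1 (hmem a ha))
  have hC0 : 0 ≤ C := le_trans (abs_nonneg _) (hP a ha)
  set v : ℝ → (Fin m → ℝ) → (Fin m → ℝ) :=
    fun σ y => (if σ ∈ uIcc a b then P σ else 0) • X y with hv_def
  have hv : ∀ σ, LipschitzOnWith (Real.toNNReal C * K) (v σ) (closedBall c ε) := by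
    intro σ
    apply lipsmul hLip
    split
    · exact hP σ ‹_›
    · simpa using hC0
  have hfc : ContinuousOn f (uIcc a b) :=
    fun σ hσ => ((hf' σ hσ).continuousAt).continuousWithinAt
  have hvf : ∀ σ ∈ uIcc a b, v σ (f σ) = P σ • X (f σ) := by
    intro σ hσ; simp [hv_def, hσ]
  have hvc : ∀ σ, v σ c = 0 := by intro σ; simp [hv_def, hXc]
  rcases le_total a b with h | h
  · have huIcc : uIcc a b = Icc a b := uIcc_of_le h
    rw [huIcc] at hf' hmem hfc
    have hsub : Ico a b ⊆ Icc a b := Ico_subset_Icc_self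
    have := ODE_solution_unique_of_mem_Icc_right (K := Real.toNNReal C * K)
      (v := v) (s := fun _ => closedBall c ε) (fun σ _ => hv σ)
      hfc
      (fun σ hσ => by
        rw [hvf σ (by rw [huIcc]; exact hsub hσ)]
        exact (hf' σ (hsub hσ)).hasDerivWithinAt)
      (fun σ hσ => hmem σ (hsub hσ))
      (continuousOn_const (c := c))
      (fun σ hσ => by
        rw [hvc σ]; exact (hasDerivAt_const σ c).hasDerivWithinAt)
      (fun σ hσ => mem_closedBall_self hε)
      (by simpa using hfa)
    exact this (right_mem_Icc.2 h)
  · have huIcc : uIcc a b = Icc b a := uIcc_of_ge h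
    rw [huIcc] at hf' hmem hfc
    have hsub : Ioc b a ⊆ Icc b a := Ioc_subset_Icc_self
    have := ODE_solution_unique_of_mem_Icc_left (K := Real.toNNReal C * K)
      (v := v) (s := fun _ => closedBall c ε) (fun σ _ => hv σ)
      hfc
      (fun σ hσ => by
        rw [hvf σ (by rw [huIcc]; exact hsub hσ)]
        exact (hf' σ (hsub hσ)).hasDerivWithinAt)
      (fun σ hσ => hmem σ (hsub hσ))
      (continuousOn_const (c := c))
      (fun σ hσ => by
        rw [hvc σ]; exact (hasDerivAt_const σ c).hasDerivWithinAt)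
      (fun σ hσ => mem_closedBall_self hε)
      (by simpa using hfa)
    exact this (left_mem_Icc.2 h)


/-!
STATEMENT 7.  Let `X : ℝ^m → ℝ^m` be a locally Lipschitz vector field,
`U ⊆ ℝ²` a connected open set, `p q : U → ℝ` continuous, and `u : U → ℝ^m` a
`C¹` map satisfying `∂u/∂s = p · X(u)` and `∂u/∂t = q · X(u)` on `U`.
If `X(u(z₀)) = 0` for some `z₀ ∈ U`, then `u` is constant on `U`, equal to
`u(z₀)`.

We model `ℝ^m` as `Fin m → ℝ` and `ℝ²` as `ℝ × ℝ`; the partial derivatives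
`∂/∂s` and `∂/∂t` are `fderiv ℝ · z (1, 0)` and `fderiv ℝ · z (0, 1)`.
The functions `p, q, u` are defined on all of `ℝ²` but all hypotheses are
imposed only on `U`.  Connectedness of the open set `U` (which is nonempty,
as `z₀ ∈ U`) is expressed by `IsPreconnected U`.
-/

theorem trivial_solution_through_zero_is_constant
    (m : ℕ) (hm : 1 ≤ m)
    (X : (Fin m → ℝ) → (Fin m → ℝ)) (hX : LocallyLipschitz X)
    (U : Set (ℝ × ℝ)) (hU : IsOpen U) (hUc : IsPreconnected U)
    (p q : ℝ × ℝ → ℝ) (u : ℝ × ℝ → (Fin m → ℝ))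
    (hp : ContinuousOn p U) (hq : ContinuousOn q U)
    (hu : ContDiffOn ℝ 1 u U)
    (hs : ∀ z ∈ U, fderiv ℝ u z (1, 0) = p z • X (u z))
    (ht : ∀ z ∈ U, fderiv ℝ u z (0, 1) = q z • X (u z))
    (z₀ : ℝ × ℝ) (hz₀ : z₀ ∈ U) (hzero : X (u z₀) = 0) :
    ∀ z ∈ U, u z = u z₀ := by
  classical
  have key : ∀ z₁ ∈ U, X (u z₁) = 0 →
      ∃ r > 0, ∀ z ∈ ball z₁ r, z ∈ U ∧ u z = u z₁ := by
    intro z₁ hz₁ hX0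
    obtain ⟨K, tset, htset, hLip⟩ := hX (u z₁)
    obtain ⟨ε, hε, hball⟩ := Metric.mem_nhds_iff.1 htset
    have hLip' : LipschitzOnWith K X (closedBall (u z₁) (ε / 2)) :=
      hLip.mono (fun y hy => hball (lt_of_le_of_lt (mem_closedBall.1 hy) (by linarith)))
    have hucont : ContinuousAt u z₁ := hu.continuousOn.continuousAt (hU.mem_nhds hz₁)
    obtain ⟨δu, hδu, hδu'⟩ := Metric.continuousAt_iff.1 hucont (ε / 2) (by linarith)
    have hpcont : ContinuousAt p z₁ := hp.continuousAt (hU.mem_nhds hz₁)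
    obtain ⟨δp, hδp, hδp'⟩ := Metric.continuousAt_iff.1 hpcont 1 one_pos
    have hqcont : ContinuousAt q z₁ := hq.continuousAt (hU.mem_nhds hz₁)
    obtain ⟨δq, hδq, hδq'⟩ := Metric.continuousAt_iff.1 hqcont 1 one_pos
    obtain ⟨rU, hrU, hrU'⟩ := Metric.isOpen_iff.1 hU z₁ hz₁
    set C : ℝ := max (|p z₁| + 1) (|q z₁| + 1) with hC
    set r : ℝ := min (min δu rU) (min δp δq) with hr
    have hr0 : 0 < r := by positivity
    refine ⟨r, hr0, ?_⟩
    have hgood : ∀ w : ℝ × ℝ, dist w z₁ < r →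
        w ∈ U ∧ u w ∈ closedBall (u z₁) (ε / 2) ∧ |p w| ≤ C ∧ |q w| ≤ C := by
      intro w hw
      have h1 : dist w z₁ < δu := lt_of_lt_of_le hw (le_trans (min_le_left _ _) (min_le_left _ _))
      have h2 : dist w z₁ < rU := lt_of_lt_of_le hw (le_trans (min_le_left _ _) (min_le_right _ _))
      have h3 : dist w z₁ < δp := lt_of_lt_of_le hw (le_trans (min_le_right _ _) (min_le_left _ _))
      have h4 : dist w z₁ < δq := lt_of_lt_of_le hw (le_trans (min_le_right _ _) (min_le_right _ _))
      refine ⟨hrU' h2, le_of_lt (hδu' h1), ?_, ?_⟩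
      · have h5 := hδp' h3
        rw [Real.dist_eq] at h5
        calc |p w| ≤ |p z₁| + |p w - p z₁| := by
              have := abs_sub_abs_le_abs_sub (p w) (p z₁); linarith
          _ ≤ |p z₁| + 1 := by linarith
          _ ≤ C := le_max_left _ _
      · have h5 := hδq' h4
        rw [Real.dist_eq] at h5
        calc |q w| ≤ |q z₁| + |q w - q z₁| := by
              have := abs_sub_abs_le_abs_sub (q w) (q z₁); linarith
          _ ≤ |q z₁| + 1 := by linarith
          _ ≤ C := le_max_right _ _
    rintro ⟨s₂, t₂⟩ hz
    rw [mem_ball] at hz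
    obtain ⟨s₁, t₁⟩ := z₁
    have hd1 : dist s₂ s₁ < r := by
      refine lt_of_le_of_lt ?_ hz
      rw [Prod.dist_eq]; exact le_max_left _ _
    have hd2 : dist t₂ t₁ < r := by
      refine lt_of_le_of_lt ?_ hz
      rw [Prod.dist_eq]; exact le_max_right _ _
    have hhor : ∀ σ ∈ uIcc s₁ s₂, dist ((σ, t₁) : ℝ × ℝ) ((s₁, t₁) : ℝ × ℝ) < r := by
      intro σ hσ
      rw [Prod.dist_eq]
      have hle : dist σ s₁ ≤ dist s₂ s₁ := by
        rw [dist_comm σ s₁, dist_comm s₂ s₁]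
        exact Real.dist_left_le_of_mem_uIcc hσ
      simp only [dist_self]
      exact max_lt (lt_of_le_of_lt hle hd1) hr0
    have hver : ∀ τ ∈ uIcc t₁ t₂, dist ((s₂, τ) : ℝ × ℝ) ((s₁, t₁) : ℝ × ℝ) < r := by
      intro τ hτ
      rw [Prod.dist_eq]
      have hle : dist τ t₁ ≤ dist t₂ t₁ := by
        rw [dist_comm τ t₁, dist_comm t₂ t₁]
        exact Real.dist_left_le_of_mem_uIcc hτ
      exact max_lt hd1 (lt_of_le_of_lt hle hd2)
    have hderiv_h : ∀ σ ∈ uIcc s₁ s₂,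
        HasDerivAt (fun x : ℝ => u (x, t₁)) (p (σ, t₁) • X (u (σ, t₁))) σ := by
      intro σ hσ
      have hwU : ((σ, t₁) : ℝ × ℝ) ∈ U := (hgood _ (hhor σ hσ)).1
      have hdiff : DifferentiableAt ℝ u (σ, t₁) :=
        (hu.differentiableOn one_ne_zero).differentiableAt (hU.mem_nhds hwU)
      have hcurve : HasDerivAt (fun x : ℝ => ((x, t₁) : ℝ × ℝ)) ((1 : ℝ), (0 : ℝ)) σ :=
        HasDerivAt.prodMk (hasDerivAt_id σ) (hasDerivAt_const σ t₁)
      have hcomp := hdiff.hasFDerivAt.comp_hasDerivAt σ hcurve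
      rw [hs _ hwU] at hcomp
      exact hcomp
    have hderiv_v : ∀ τ ∈ uIcc t₁ t₂,
        HasDerivAt (fun y : ℝ => u (s₂, y)) (q (s₂, τ) • X (u (s₂, τ))) τ := by
      intro τ hτ
      have hwU : ((s₂, τ) : ℝ × ℝ) ∈ U := (hgood _ (hver τ hτ)).1
      have hdiff : DifferentiableAt ℝ u (s₂, τ) :=
        (hu.differentiableOn one_ne_zero).differentiableAt (hU.mem_nhds hwU)
      have hcurve : HasDerivAt (fun y : ℝ => ((s₂, y) : ℝ × ℝ)) ((0 : ℝ), (1 : ℝ)) τ :=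
        HasDerivAt.prodMk (hasDerivAt_const τ s₂) (hasDerivAt_id τ)
      have hcomp := hdiff.hasFDerivAt.comp_hasDerivAt τ hcurve
      rw [ht _ hwU] at hcomp
      exact hcomp
    have h1 : u (s₂, t₁) = u (s₁, t₁) :=
      ode_const hLip' hX0 hderiv_h
        (fun σ hσ => (hgood _ (hhor σ hσ)).2.1)
        (fun σ hσ => (hgood _ (hhor σ hσ)).2.2.1)
        rfl
    have h2 : u (s₂, t₂) = u (s₁, t₁) :=
      ode_const hLip' hX0 hderiv_v
        (fun τ hτ => (hgood _ (hver τ hτ)).2.1)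
        (fun τ hτ => (hgood _ (hver τ hτ)).2.2.2)
        h1
    exact ⟨(hgood _ hz).1, h2⟩
  -- clopen argument
  set A : Set (ℝ × ℝ) := {z | z ∈ U ∧ u z = u z₀} with hA
  set B : Set (ℝ × ℝ) := {z | z ∈ U ∧ u z ≠ u z₀} with hB
  have hAopen : IsOpen A := by
    rw [Metric.isOpen_iff]
    rintro z ⟨hzU, hzv⟩
    obtain ⟨r, hr0, hres⟩ := key z hzU (by rw [hzv]; exact hzero)
    exact ⟨r, hr0, fun w hw => ⟨(hres w hw).1, (hres w hw).2.trans hzv⟩⟩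
  have hBopen : IsOpen B := by
    have hBeq : B = U ∩ u ⁻¹' ({u z₀}ᶜ) := by
      ext w; simp [hB]
    rw [hBeq]
    exact hu.continuousOn.isOpen_inter_preimage hU isClosed_singleton.isOpen_compl
  have hdisj : Disjoint A B := Set.disjoint_left.2 fun z hz hz' => hz'.2 hz.2
  have hcover : U ⊆ A ∪ B := by
    intro z hz
    by_cases h : u z = u z₀
    · exact Or.inl ⟨hz, h⟩
    · exact Or.inr ⟨hz, h⟩
  have hne : (U ∩ A).Nonempty := ⟨z₀, hz₀, hz₀, rfl⟩
  have hsub := hUc.subset_left_of_subset_union hAopen hBopen hdisj hcover hne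
  exact fun z hz => (hsub hz).2
end

section
/- For every C > 0 there exists D > 0 such that for every l ≥ 0, every s ∈ [0,l] and every t ∈ [0,1]: |f(−e^{−π(s+it)}, −e^{−π(l−s−it)})| ≤ D · max( e^{−C s}, e^{−C(l−s)} ). In other words, the restriction of f to the neck of gluing parameter l decays faster than any exponential rate, uniformly in l, when measured from the nearer end of the finite strip [0,l] × [0,1]. (This is the paper's superexponential decay estimate on the necks of glued surfaces, for a function on the compactified universal family which vanishes to infinite order at a singular point; the neck coordinates are δ₋ = −e^{−π(s+it)} and δ₊ = −e^{−π(l−s−it)}.) -/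
/-!
STATEMENT 10.  Let `f` be a continuous function on the closed unit bidisc
`P = {(z₁,z₂) : |z₁| ≤ 1, |z₂| ≤ 1} ⊆ ℂ²` which is `C^∞` on some
neighbourhood of `(0,0)` and vanishes to infinite order at `(0,0)` (all
iterated (real) partial derivatives of `f` vanish at `(0,0)`).  Then for
every `C > 0` there exists `D > 0` such that for every `l ≥ 0`, every
`s ∈ [0,l]` and every `t ∈ [0,1]`:
`|f(−e^{−π(s+it)}, −e^{−π(l−s−it)})| ≤ D · max(e^{−C s}, e^{−C (l−s)})`.

(The superexponential decay estimate on the necks of glued surfaces, for a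
function on the compactified universal family vanishing to infinite order at
a singular point; the neck coordinates are `δ₋ = −e^{−π(s+it)}` and
`δ₊ = −e^{−π(l−s−it)}`.)

We take `f : ℂ × ℂ → ℂ`; all hypotheses are imposed only on the closed unit
bidisc (note both coordinates lie in the closed unit disc for `0 ≤ s ≤ l`).
Smoothness is real (`ℝ`-)smoothness, and "vanishing to infinite order" is
`iteratedFDeriv ℝ k f (0,0) = 0` for all `k`.
-/

lemma aux_decay (n : ℕ) :
    ∀ {F : Type} [NormedAddCommGroup F] [NormedSpace ℝ F] (g : ℂ × ℂ → F)
      (U : Set (ℂ × ℂ)), IsOpen U → (0 : ℂ × ℂ) ∈ U → ContDiffOn ℝ (⊤ : ℕ∞) g U →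
      (∀ k : ℕ, iteratedFDeriv ℝ k g 0 = 0) →
      ∃ r > (0:ℝ), ∃ K > (0:ℝ), ∀ x : ℂ × ℂ, ‖x‖ ≤ r → ‖g x‖ ≤ K * ‖x‖ ^ n := by
  induction n with
  | zero =>
    intro F _ _ g U hU h0 hg hv
    have hc : ContinuousAt g 0 := (hg.contDiffAt (hU.mem_nhds h0)).continuousAt
    have hg0 : g 0 = 0 := by
      have := hv 0
      have h := congrArg (fun T => T ![]) this
      simpa [iteratedFDeriv_zero_apply] using h
    rcases Metric.continuousAt_iff.1 hc 1 one_pos with ⟨δ, hδ, hball⟩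
    refine ⟨δ/2, by positivity, 1, one_pos, fun x hx => ?_⟩
    have : dist x 0 < δ := by
      simpa [dist_zero_right] using lt_of_le_of_lt hx (by linarith)
    have := hball this
    simp only [hg0, dist_zero_right] at this
    simpa using this.le
  | succ n ih =>
    intro F _ _ g U hU h0 hg hv
    have hg' : ContDiffOn ℝ (⊤ : ℕ∞) (fderiv ℝ g) U :=
      hg.fderiv_of_isOpen hU (le_refl _)
    have hv' : ∀ k : ℕ, iteratedFDeriv ℝ k (fderiv ℝ g) 0 = 0 := by
      intro k
      have : ‖iteratedFDeriv ℝ k (fderiv ℝ g) 0‖ = 0 := by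
        rw [norm_iteratedFDeriv_fderiv, hv (k+1), norm_zero]
      simpa using this
    rcases ih (fderiv ℝ g) U hU h0 hg' hv' with ⟨r, hr, K, hK, hb⟩
    rcases Metric.isOpen_iff.1 hU 0 h0 with ⟨ρ, hρ, hρU⟩
    refine ⟨min r (ρ/2), by positivity, K, hK, fun x hx => ?_⟩
    have hg0 : g 0 = 0 := by
      have h := congrArg (fun T => T ![]) (hv 0)
      simpa [iteratedFDeriv_zero_apply] using h
    have hxr : ‖x‖ ≤ r := hx.trans (min_le_left _ _)
    have hxρ : ‖x‖ ≤ ρ/2 := hx.trans (min_le_right _ _)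
    have hsub : Metric.closedBall (0 : ℂ × ℂ) ‖x‖ ⊆ U := fun y hy => by
      apply hρU
      have : ‖y‖ ≤ ‖x‖ := by simpa [dist_zero_right] using hy
      simp only [Metric.mem_ball, dist_zero_right]
      linarith
    have key : ‖g x - g 0‖ ≤ (K * ‖x‖ ^ n) * ‖x - 0‖ := by
      apply Convex.norm_image_sub_le_of_norm_fderiv_le
        (fun y hy => (hg.contDiffAt (hU.mem_nhds (hsub hy))).differentiableAt (by simp))
        (fun y hy => ?_) (convex_closedBall _ _)
        (Metric.mem_closedBall_self (norm_nonneg x))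
        (by simpa [dist_zero_right] using le_refl ‖x‖)
      have hy' : ‖y‖ ≤ ‖x‖ := by simpa [dist_zero_right] using hy
      calc ‖fderiv ℝ g y‖ ≤ K * ‖y‖ ^ n := hb y (hy'.trans hxr)
        _ ≤ K * ‖x‖ ^ n := by
            apply mul_le_mul_of_nonneg_left (pow_le_pow_left₀ (norm_nonneg _) hy' n) hK.le
    simp only [hg0, sub_zero] at key
    calc ‖g x‖ ≤ K * ‖x‖ ^ n * ‖x‖ := key
      _ = K * ‖x‖ ^ (n+1) := by ring

lemma max_exp_min (c s u : ℝ) (hc : 0 ≤ c) :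
    max (Real.exp (-c * s)) (Real.exp (-c * u)) = Real.exp (-c * min s u) := by
  rcases le_total s u with h | h
  · rw [min_eq_left h, max_eq_left]
    exact Real.exp_le_exp.2 (by nlinarith)
  · rw [min_eq_right h, max_eq_right]
    exact Real.exp_le_exp.2 (by nlinarith)

theorem superexponential_decay_on_neck
    (f : ℂ × ℂ → ℂ)
    (hcont : ContinuousOn f (Metric.closedBall 0 1 ×ˢ Metric.closedBall 0 1))
    (hsmooth : ∃ V ∈ nhds ((0, 0) : ℂ × ℂ), ContDiffOn ℝ (⊤ : ℕ∞) f V)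
    (hvanish : ∀ k : ℕ, iteratedFDeriv ℝ k f (0, 0) = 0) :
    ∀ C : ℝ, 0 < C → ∃ D : ℝ, 0 < D ∧
      ∀ l : ℝ, 0 ≤ l → ∀ s ∈ Set.Icc (0 : ℝ) l, ∀ t ∈ Set.Icc (0 : ℝ) 1,
        norm
            (f (-Complex.exp (-(Real.pi : ℂ) * ((s : ℂ) + (t : ℂ) * Complex.I)),
                -Complex.exp (-(Real.pi : ℂ) * ((l : ℂ) - (s : ℂ) - (t : ℂ) * Complex.I)))) ≤
          D * max (Real.exp (-C * s)) (Real.exp (-C * (l - s))) := by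
  intro C hC
  obtain ⟨V, hV, hfV⟩ := hsmooth
  -- bound on the bidisc
  have hcpt : IsCompact ((Metric.closedBall (0:ℂ) 1) ×ˢ (Metric.closedBall (0:ℂ) 1)) :=
    (isCompact_closedBall _ _).prod (isCompact_closedBall _ _)
  obtain ⟨M, hM⟩ := hcpt.exists_bound_of_continuousOn hcont
  have hM0 : 0 ≤ M := le_trans (norm_nonneg _)
    (hM (0,0) (by simp [Set.mem_prod, Metric.mem_closedBall]))
  -- choose n with C ≤ π n
  obtain ⟨n, hn⟩ := exists_nat_ge (C / Real.pi)
  have hCn : C ≤ Real.pi * n := by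
    rw [div_le_iff₀ Real.pi_pos] at hn; linarith
  -- local superpolynomial bound
  have h00 : ((0,0) : ℂ × ℂ) = (0 : ℂ × ℂ) := rfl
  obtain ⟨r, hr, K, hK, hb⟩ := aux_decay n f (interior V) isOpen_interior
    (by rw [← h00]; exact mem_interior_iff_mem_nhds.2 hV)
    (hfV.mono interior_subset) (fun k => hvanish k)
  refine ⟨max K (M / r ^ n), lt_of_lt_of_le hK (le_max_left _ _), ?_⟩
  intro l hl s hs t ht
  set m := min s (l - s) with hm
  have hm0 : 0 ≤ m := le_min hs.1 (by linarith [hs.2])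
  have hms : m ≤ s := min_le_left _ _
  have hmu : m ≤ l - s := min_le_right _ _
  -- the point and its norm
  set x : ℂ × ℂ := (-Complex.exp (-(Real.pi : ℂ) * ((s : ℂ) + (t : ℂ) * Complex.I)),
      -Complex.exp (-(Real.pi : ℂ) * ((l : ℂ) - (s : ℂ) - (t : ℂ) * Complex.I))) with hx
  have habs1 : ‖x.1‖ = Real.exp (-Real.pi * s) := by
    simp [hx, Complex.norm_exp, Complex.mul_re, Complex.add_re, Complex.mul_im,
      Complex.I_re, Complex.I_im]
  have habs2 : ‖x.2‖ = Real.exp (-Real.pi * (l - s)) := by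
    simp [hx, Complex.norm_exp, Complex.mul_re, Complex.sub_re, Complex.add_re,
      Complex.mul_im, Complex.I_re, Complex.I_im]
  have hnormx : ‖x‖ = Real.exp (-Real.pi * m) := by
    rw [Prod.norm_def]
    show max ‖x.1‖ ‖x.2‖ = _
    rw [habs1, habs2, max_exp_min _ _ _ Real.pi_pos.le]
  have hrhs : max (Real.exp (-C * s)) (Real.exp (-C * (l - s))) = Real.exp (-C * m) :=
    max_exp_min _ _ _ hC.le
  rw [hrhs]
  have hexp_pos : (0:ℝ) < Real.exp (-C * m) := Real.exp_pos _
  rcases le_or_gt ‖x‖ r with hcase | hcase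
  · -- small case
    have h1 : ‖f x‖ ≤ K * ‖x‖ ^ n := hb x hcase
    have h2 : ‖x‖ ^ n ≤ Real.exp (-C * m) := by
      rw [hnormx, ← Real.exp_nat_mul]
      apply Real.exp_le_exp.2
      have : 0 ≤ (n:ℝ) := Nat.cast_nonneg n
      nlinarith
    calc ‖f x‖ ≤ K * Real.exp (-C * m) := by nlinarith
      _ ≤ max K (M / r ^ n) * Real.exp (-C * m) := by
          apply mul_le_mul_of_nonneg_right (le_max_left _ _) hexp_pos.le
  · -- large case: use global bound
    have hxmem : x ∈ (Metric.closedBall (0:ℂ) 1) ×ˢ (Metric.closedBall (0:ℂ) 1) := by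
      constructor
      · simp only [Metric.mem_closedBall, dist_zero_right]
        show ‖x.1‖ ≤ 1
        rw [habs1]; exact Real.exp_le_one_iff.2 (by nlinarith [Real.pi_pos, hs.1])
      · simp only [Metric.mem_closedBall, dist_zero_right]
        show ‖x.2‖ ≤ 1
        rw [habs2]; exact Real.exp_le_one_iff.2 (by nlinarith [Real.pi_pos, hs.2])
    have h1 : ‖f x‖ ≤ M := hM x hxmem
    have h2 : r ^ n ≤ Real.exp (-C * m) := by
      have : r ^ n ≤ ‖x‖ ^ n := pow_le_pow_left₀ hr.le hcase.le n
      rw [hnormx, ← Real.exp_nat_mul] at this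
      refine this.trans (Real.exp_le_exp.2 ?_)
      have : 0 ≤ (n:ℝ) := Nat.cast_nonneg n
      nlinarith
    have hrn : (0:ℝ) < r ^ n := pow_pos hr n
    calc ‖f x‖ ≤ M := h1
      _ ≤ M / r ^ n * Real.exp (-C * m) := by
          rw [div_mul_eq_mul_div, le_div_iff₀ hrn]
          nlinarith
      _ ≤ max K (M / r ^ n) * Real.exp (-C * m) := by
          apply mul_le_mul_of_nonneg_right (le_max_right _ _) hexp_pos.le
end
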